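/- Let v, z ∈ C²([−1,1]) ∩ C⁰([−1,1]) with v(±1) = z(±1) = 0, −v'' = λ√(1−2v) and −z'' = 6√(1−2z) on (−1,1), where 0 ≤ 2v, 2z ≤ 1 and λ ≥ 6. Then z(s) ≤ v(s) for all s ∈ [−1,1]. -/

import Mathlib

theorem stmt4 (lam : ℝ) (hlam : 6 ≤ lam) (v z : ℝ → ℝ)
    (hv : ContDiff ℝ 2 v) (hz : ContDiff ℝ 2 z)
    (hvb1 : v (-1) = 0) (hvb2 : v 1 = 0) (hzb1 : z (-1) = 0) (hzb2 : z 1 = 0)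
    (hveq : ∀ s ∈ Set.Ioo (-1 : ℝ) 1, -(deriv (deriv v) s) = lam * Real.sqrt (1 - 2 * v s))
    (hzeq : ∀ s ∈ Set.Ioo (-1 : ℝ) 1, -(deriv (deriv z) s) = 6 * Real.sqrt (1 - 2 * z s))
    (hvr : ∀ s ∈ Set.Icc (-1 : ℝ) 1, 0 ≤ 2 * v s ∧ 2 * v s ≤ 1)
    (hzr : ∀ s ∈ Set.Icc (-1 : ℝ) 1, 0 ≤ 2 * z s ∧ 2 * z s ≤ 1) :
    ∀ s ∈ Set.Icc (-1 : ℝ) 1, z s ≤ v s := by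
  set w : ℝ → ℝ := fun s => z s - v s with hwdef
  have hvd : Differentiable ℝ v := hv.differentiable (by norm_num)
  have hzd : Differentiable ℝ z := hz.differentiable (by norm_num)
  have hv1 : ContDiff ℝ 1 (deriv v) := by
    have := (contDiff_succ_iff_deriv.mp (show ContDiff ℝ (1+1) v by exact_mod_cast hv)).2.2
    exact_mod_cast this
  have hz1 : ContDiff ℝ 1 (deriv z) := by
    have := (contDiff_succ_iff_deriv.mp (show ContDiff ℝ (1+1) z by exact_mod_cast hz)).2.2
    exact_mod_cast this
  have hvd2 : Differentiable ℝ (deriv v) := hv1.differentiable one_ne_zero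
  have hzd2 : Differentiable ℝ (deriv z) := hz1.differentiable one_ne_zero
  have hwd : Differentiable ℝ w := hzd.sub hvd
  have hwc : Continuous w := hwd.continuous
  have hwderiv : deriv w = fun s => deriv z s - deriv v s := by
    funext t; exact deriv_sub (hzd t) (hvd t)
  have hwd2 : Differentiable ℝ (deriv w) := by rw [hwderiv]; exact hzd2.sub hvd2
  have hwderiv2 : ∀ t, deriv (deriv w) t = deriv (deriv z) t - deriv (deriv v) t := by
    intro t; rw [hwderiv]; exact deriv_sub (hzd2 t) (hvd2 t)
  -- key: second derivative nonneg where w ≥ 0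
  have key : ∀ t ∈ Set.Ioo (-1:ℝ) 1, 0 ≤ w t → 0 ≤ deriv (deriv w) t := by
    intro t ht hwt
    rw [hwderiv2]
    have h1 := hveq t ht
    have h2 := hzeq t ht
    have htIcc : t ∈ Set.Icc (-1:ℝ) 1 := Set.mem_Icc_of_Ioo ht
    have hzr' := hzr t htIcc
    have hws : v t ≤ z t := by simpa [hwdef] using hwt
    have h3 : Real.sqrt (1 - 2 * z t) ≤ Real.sqrt (1 - 2 * v t) := by
      apply Real.sqrt_le_sqrt; linarith
    have h4 : 0 ≤ Real.sqrt (1 - 2 * v t) := Real.sqrt_nonneg _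
    nlinarith [mul_nonneg (by linarith : (0:ℝ) ≤ lam - 6) h4]
  intro s hs
  by_contra hcon
  push_neg at hcon
  have hws : 0 < w s := by simpa [hwdef] using hcon
  have hwm1 : w (-1) = 0 := by simp [hwdef, hzb1, hvb1]
  have hwp1 : w (1:ℝ) = 0 := by simp [hwdef, hzb2, hvb2]
  -- define the component endpoints
  set A : Set ℝ := Set.Icc (-1:ℝ) s ∩ {t | w t ≤ 0} with hAdef
  set B : Set ℝ := Set.Icc s (1:ℝ) ∩ {t | w t ≤ 0} with hBdef
  have hAne : A.Nonempty := ⟨-1, ⟨⟨le_refl _, hs.1⟩, by simp [hwm1]⟩⟩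
  have hBne : B.Nonempty := ⟨1, ⟨⟨hs.2, le_refl _⟩, by simp [hwp1]⟩⟩
  have hAcl : IsClosed A := isClosed_Icc.inter (isClosed_le hwc continuous_const)
  have hBcl : IsClosed B := isClosed_Icc.inter (isClosed_le hwc continuous_const)
  have hAcp : IsCompact A := isCompact_Icc.inter_right (isClosed_le hwc continuous_const)
  have hBcp : IsCompact B := isCompact_Icc.inter_right (isClosed_le hwc continuous_const)
  set a := sSup A with hadef
  set b := sInf B with hbdef
  have haA : a ∈ A := hAcp.sSup_mem hAne
  have hbB : b ∈ B := hBcp.sInf_mem hBne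
  have has : a ≤ s := haA.1.2
  have hsb : s ≤ b := hbB.1.1
  have haw : w a ≤ 0 := haA.2
  have hbw : w b ≤ 0 := hbB.2
  have hane : a ≠ s := fun h => by rw [h] at haw; linarith
  have hbne : b ≠ s := fun h => by rw [h] at hbw; linarith
  have halt : a < s := lt_of_le_of_ne has hane
  have hblt : s < b := lt_of_le_of_ne hsb (Ne.symm hbne)
  have ham1 : (-1:ℝ) ≤ a := haA.1.1
  have hb1 : b ≤ (1:ℝ) := hbB.1.2
  -- w ≥ 0 on Ioo a b
  have hpos : ∀ t ∈ Set.Ioo a b, 0 ≤ w t := by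
    intro t ht
    by_contra hneg
    push_neg at hneg
    rcases le_or_gt t s with hts | hst
    · have : t ∈ A := ⟨⟨le_trans ham1 ht.1.le, hts⟩, hneg.le⟩
      have := le_csSup hAcp.bddAbove this
      exact absurd this (not_le.mpr ht.1)
    · have : t ∈ B := ⟨⟨hst.le, le_trans ht.2.le hb1⟩, hneg.le⟩
      have := csInf_le hBcp.bddBelow this
      exact absurd this (not_le.mpr ht.2)
  have hIooSub : Set.Ioo a b ⊆ Set.Ioo (-1:ℝ) 1 := fun t ht =>
    ⟨lt_of_le_of_lt ham1 ht.1, lt_of_lt_of_le ht.2 hb1⟩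
  -- convexity of w on Icc a b
  have hconv : ConvexOn ℝ (Set.Icc a b) w := by
    apply convexOn_of_deriv2_nonneg (convex_Icc a b) hwc.continuousOn
      (hwd.differentiableOn) (hwd2.differentiableOn)
    intro t ht
    rw [interior_Icc] at ht
    have : deriv^[2] w t = deriv (deriv w) t := by
      simp [Function.iterate_succ, Function.iterate_one]
    rw [this]
    exact key t (hIooSub ht) (hpos t ht)
  have hseg : s ∈ segment ℝ a b := by
    rw [segment_eq_Icc (le_trans has hsb)]
    exact ⟨has, hsb⟩
  have := hconv.le_on_segment (Set.left_mem_Icc.mpr (le_trans has hsb))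
    (Set.right_mem_Icc.mpr (le_trans has hsb)) hseg
  have : w s ≤ 0 := le_trans this (max_le haw hbw)
  linarith
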